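/- Let X be a topological space, h : X → [0,1] a continuous function, and z ∈ X a point with h(z) = 0 that lies in the closure of {x ∈ X : h(x) > 0}. Assume there exists a neighborhood W of z such that the closure of h(W) in ℝ contains no interval of the form [0, ε) with ε > 0. Then there exist a sequence (g_n)_{n∈ℕ} of continuous functions from X to [0,2] and a sequence (U_n)_{n∈ℕ} of open subsets of X such that conditions (i)–(iii) hold for the point z (with κ = ℕ). -/
import Mathlib

noncomputable def rampFn (α β s : ℝ) : ℝ := max 0 (min 1 ((s - α) / (β - α)))

lemma rampFn_mem (α β s : ℝ) : rampFn α β s ∈ Set.Icc (0:ℝ) 1 :=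
  ⟨le_max_left _ _, max_le zero_le_one (min_le_left _ _)⟩

lemma rampFn_of_le {α β s : ℝ} (hαβ : α < β) (hs : s ≤ α) : rampFn α β s = 0 := by
  have : (s - α) / (β - α) ≤ 0 := div_nonpos_iff.mpr (Or.inr ⟨by linarith, by linarith⟩)
  exact max_eq_left (le_trans (min_le_right _ _) this)

lemma rampFn_of_ge {α β s : ℝ} (hαβ : α < β) (hs : β ≤ s) : rampFn α β s = 1 := by
  have h1 : (1:ℝ) ≤ (s - α) / (β - α) := (one_le_div (by linarith)).mpr (by linarith)
  have : min 1 ((s - α) / (β - α)) = 1 := min_eq_left h1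
  rw [rampFn, this]; exact max_eq_right zero_le_one

lemma rampFn_continuous {X : Type*} [TopologicalSpace X] (α β : ℝ) {h : X → ℝ}
    (hc : Continuous h) : Continuous fun x => rampFn α β (h x) :=
  continuous_const.max (continuous_const.min ((hc.sub continuous_const).div_const _))

theorem exists_family_of_closure_omits_intervals {X : Type*} [TopologicalSpace X]
    (h : X → ℝ) (hc : Continuous h) (h01 : ∀ x, h x ∈ Set.Icc (0 : ℝ) 1)
    (z : X) (hz0 : h z = 0) (hzcl : z ∈ closure {x : X | 0 < h x})
    (hW : ∃ W ∈ nhds z, ∀ ε > (0 : ℝ), ¬ Set.Ico (0 : ℝ) ε ⊆ closure (h '' W)) :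
    ∃ (g : ℕ → X → ℝ) (U : ℕ → Set X),
      (∀ n, Continuous (g n)) ∧ (∀ n x, g n x ∈ Set.Icc (0 : ℝ) 2) ∧
      (∀ n, IsOpen (U n)) ∧
      (∀ n, tsupport (g n) ⊆ U n) ∧
      (∀ n m, n ≠ m → U n ∩ U m = ∅) ∧
      (∀ n, z ∉ U n) ∧
      z ∈ closure (⋃ n, {x : X | 1 ≤ g n x}) := by
  classical
  obtain ⟨W, hWnhds, hWgap⟩ := hW
  set C := closure (h '' W) with hC
  have hzW : (0:ℝ) ∈ C := subset_closure ⟨z, mem_of_mem_nhds hWnhds, hz0⟩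
  have hhxC : ∀ x ∈ W, h x ∈ C := fun x hx => subset_closure ⟨x, hx, rfl⟩
  -- step: gaps in C arbitrarily close to 0
  have step : ∀ ε : ℝ, 0 < ε → ∃ q : ℝ × ℝ, 0 < q.1 ∧ q.1 < q.2 ∧ q.2 < ε ∧
      ∀ s ∈ Set.Icc q.1 q.2, s ∉ C := by
    intro ε hε
    obtain ⟨t, ht, htC⟩ := Set.not_subset.mp (hWgap (ε/2) (by linarith))
    have ht0 : 0 < t := lt_of_le_of_ne ht.1 (by rintro rfl; exact htC hzW)
    obtain ⟨δ, hδ, hball⟩ := Metric.isOpen_iff.mp isClosed_closure.isOpen_compl t htC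
    set δ' := min (δ/2) (min (t/2) (ε/2)) with hδ'
    have hδ'pos : 0 < δ' := lt_min (by linarith) (lt_min (by linarith) (by linarith))
    have hδ'1 : δ' ≤ δ/2 := min_le_left _ _
    have hδ'2 : δ' ≤ t/2 := le_trans (min_le_right _ _) (min_le_left _ _)
    have hδ'3 : δ' ≤ ε/2 := le_trans (min_le_right _ _) (min_le_right _ _)
    refine ⟨(t - δ', t + δ'), by simp only; linarith, by simp only; linarith,
      by simp only; linarith [ht.2], ?_⟩
    intro s hs
    have : s ∈ Metric.ball t δ := by
      rw [Metric.mem_ball, Real.dist_eq, abs_lt]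
      obtain ⟨hs1, hs2⟩ := hs
      simp only at hs1 hs2
      constructor <;> linarith
    exact hball this
  -- recursive construction of the gap sequence
  let F : ℕ → ℝ × ℝ → ℝ × ℝ := fun n q =>
    if hq : 0 < q.1 then
      (step (min q.1 (1/(n+1))) (lt_min hq (by positivity))).choose else (1, 2)
  let p : ℕ → ℝ × ℝ := fun n => Nat.rec (step 1 one_pos).choose F n
  have hpsucc : ∀ n, p (n+1) = F n (p n) := fun n => rfl
  have inv : ∀ n, 0 < (p n).1 ∧ (p n).1 < (p n).2 ∧ ∀ s ∈ Set.Icc (p n).1 (p n).2, s ∉ C := by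
    intro n
    induction n with
    | zero =>
      obtain ⟨h1, h2, _, h4⟩ := (step 1 one_pos).choose_spec
      exact ⟨h1, h2, h4⟩
    | succ n ih =>
      have hF : p (n+1) =
          (step (min (p n).1 (1/(n+1))) (lt_min ih.1 (by positivity))).choose := by
        rw [hpsucc n]; simp only [F, dif_pos ih.1]
      obtain ⟨h1, h2, _, h4⟩ :=
        (step (min (p n).1 (1/(n+1))) (lt_min ih.1 (by positivity))).choose_spec
      rw [hF]; exact ⟨h1, h2, h4⟩
  have link : ∀ n, (p (n+1)).2 < min (p n).1 (1/(n+1)) := by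
    intro n
    have hF : p (n+1) =
        (step (min (p n).1 (1/(n+1))) (lt_min (inv n).1 (by positivity))).choose := by
      rw [hpsucc n]; simp only [F, dif_pos (inv n).1]
    obtain ⟨_, _, h3, _⟩ :=
      (step (min (p n).1 (1/(n+1))) (lt_min (inv n).1 (by positivity))).choose_spec
    rw [hF]; exact h3
  set a : ℕ → ℝ := fun n => (p n).1 with ha
  set b : ℕ → ℝ := fun n => (p n).2 with hb
  have hapos : ∀ n, 0 < a n := fun n => (inv n).1
  have hab : ∀ n, a n < b n := fun n => (inv n).2.1
  have hnotC : ∀ n s, s ∈ Set.Icc (a n) (b n) → s ∉ C := fun n => (inv n).2.2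
  have hba : ∀ n, b (n+1) < a n := fun n => lt_of_lt_of_le (link n) (min_le_left _ _)
  have hsmall : ∀ n : ℕ, b (n+1) < 1/(n+1) :=
    fun n => lt_of_lt_of_le (link n) (min_le_right _ _)
  -- midpoints and ramps
  set m : ℕ → ℝ := fun n => (a n + b n) / 2 with hm
  set l : ℕ → ℝ := fun n => (a n + 3 * b n) / 4 with hl
  set r : ℕ → ℝ := fun n => (3 * a n + b n) / 4 with hr
  have hmlt : ∀ n, a n < r n ∧ r n < m n ∧ m n < l n ∧ l n < b n := by
    intro n; have := hab n
    refine ⟨by simp only [hr]; linarith, by simp only [hr, hm]; linarith,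
      by simp only [hm, hl]; linarith, by simp only [hl]; linarith⟩
  have hmdec : StrictAnti m := by
    apply strictAnti_nat_of_succ_lt
    intro n
    have h1 := (hmlt (n+1)).2.2.2
    have h2 := hba n
    have h3 := (hmlt n).2.1
    have h4 := (hmlt n).1
    calc m (n+1) < b (n+1) := lt_trans (hmlt (n+1)).2.2.1 h1
      _ < a n := h2
      _ < m n := lt_trans h4 h3
  set g : ℕ → X → ℝ := fun n x =>
    rampFn (l (n+1)) (b (n+1)) (h x) * (1 - rampFn (a n) (r n) (h x)) with hg
  set U : ℕ → Set X := fun n => h ⁻¹' Set.Ioo (m (n+1)) (m n) with hU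
  have hgone : ∀ n x, b (n+1) ≤ h x → h x ≤ a n → g n x = 1 := by
    intro n x h1 h2
    simp only [hg]
    rw [rampFn_of_ge (hmlt (n+1)).2.2.2 h1, rampFn_of_le (hmlt n).1 h2]
    ring
  refine ⟨g, U, ?_, ?_, ?_, ?_, ?_, ?_, ?_⟩
  · intro n
    exact (rampFn_continuous _ _ hc).mul
      (continuous_const.sub (rampFn_continuous _ _ hc))
  · intro n x
    have h1 := rampFn_mem (l (n+1)) (b (n+1)) (h x)
    have h2 := rampFn_mem (a n) (r n) (h x)
    constructor
    · exact mul_nonneg h1.1 (by linarith [h2.2])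
    · have : g n x ≤ 1 := by
        simp only [hg]
        calc rampFn (l (n+1)) (b (n+1)) (h x) * (1 - rampFn (a n) (r n) (h x))
            ≤ 1 * 1 := mul_le_mul h1.2 (by linarith [h2.1]) (by linarith [h2.2]) zero_le_one
          _ = 1 := by ring
      linarith
  · intro n; exact isOpen_Ioo.preimage hc
  · intro n
    have hsupp : Function.support (g n) ⊆ h ⁻¹' Set.Icc (l (n+1)) (r n) := by
      intro x hx
      simp only [Function.mem_support, hg] at hx
      obtain ⟨h1, h2⟩ := mul_ne_zero_iff.mp hx
      constructor
      · by_contra hle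
        exact h1 (rampFn_of_le (hmlt (n+1)).2.2.2 (le_of_not_gt fun hh => hle (le_of_lt hh)))
      · by_contra hge
        push_neg at hge
        exact h2 (by rw [rampFn_of_ge (hmlt n).1 hge.le]; ring)
    -- fix the support inclusion: need s ≤ l → ramp = 0, i.e. ¬(l < h x) case
    have hsupp' : Function.support (g n) ⊆ h ⁻¹' Set.Icc (l (n+1)) (r n) := hsupp
    have hclosed : IsClosed (h ⁻¹' Set.Icc (l (n+1)) (r n)) := isClosed_Icc.preimage hc
    have : tsupport (g n) ⊆ h ⁻¹' Set.Icc (l (n+1)) (r n) :=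
      closure_minimal hsupp' hclosed
    refine subset_trans this ?_
    intro x hx
    simp only [Set.mem_preimage, Set.mem_Icc] at hx
    simp only [hU, Set.mem_preimage, Set.mem_Ioo]
    exact ⟨lt_of_lt_of_le (hmlt (n+1)).2.2.1 hx.1, lt_of_le_of_lt hx.2 (hmlt n).2.1⟩
  · intro n k hne
    rcases lt_or_gt_of_ne hne with hlt | hlt
    all_goals {
      ext x
      simp only [hU, Set.mem_inter_iff, Set.mem_preimage, Set.mem_Ioo, Set.mem_empty_iff_false,
        iff_false, not_and, and_imp]
      intro h1 h2 h3
      first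
      | · -- n < k : m k ≤ m (n+1)
          have : m k ≤ m (n+1) := hmdec.antitone hlt
          linarith
      | · have : m n ≤ m (k+1) := hmdec.antitone hlt
          linarith
    }
  · intro n
    simp only [hU, Set.mem_preimage, Set.mem_Ioo, hz0]
    intro hcon
    have := (hmlt (n+1)).1
    have := hapos (n+1)
    linarith [lt_trans (hapos (n+1)) (lt_trans (hmlt (n+1)).1 (hmlt (n+1)).2.1)]
  · rw [mem_closure_iff]
    intro o ho hzo
    have hWo : z ∈ interior W := mem_interior_iff_mem_nhds.mpr hWnhds
    have hV : IsOpen (o ∩ interior W ∩ h ⁻¹' Set.Iio (b 0)) :=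
      (ho.inter isOpen_interior).inter (isOpen_Iio.preimage hc)
    have hzV : z ∈ o ∩ interior W ∩ h ⁻¹' Set.Iio (b 0) := by
      refine ⟨⟨hzo, hWo⟩, ?_⟩
      simp only [Set.mem_preimage, Set.mem_Iio, hz0]
      exact lt_trans (hapos 0) (hab 0)
    obtain ⟨x, hxV, hxpos⟩ :=
      mem_closure_iff.mp hzcl _ hV hzV
    obtain ⟨⟨hxo, hxW⟩, hxb0⟩ := hxV
    simp only [Set.mem_setOf_eq] at hxpos
    simp only [Set.mem_preimage, Set.mem_Iio] at hxb0
    have hxC : h x ∈ C := hhxC x (interior_subset hxW)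
    -- find minimal n with a n < h x
    have hex : ∃ n, a n < h x := by
      obtain ⟨N, hN⟩ := exists_nat_one_div_lt hxpos
      exact ⟨N + 1, lt_trans (lt_trans (hab (N+1)) (hsmall N)) hN⟩
    set n0 := Nat.find hex with hn0
    have hn0lt : a n0 < h x := Nat.find_spec hex
    have hn0min : ∀ k < n0, ¬ a k < h x := fun k hk => Nat.find_min hex hk
    have hne0 : n0 ≠ 0 := by
      intro h0
      have h00 : a 0 < h x := h0 ▸ hn0lt
      exact hnotC 0 _ ⟨le_of_lt h00, le_of_lt hxb0⟩ hxC
    obtain ⟨k, hn0eq⟩ := Nat.exists_eq_succ_of_ne_zero hne0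
    rw [hn0eq] at hn0lt hn0min
    · have hk1 : a (k+1) < h x := hn0lt
      have hk2 : h x ≤ a k := le_of_not_gt (hn0min k (by omega))
      have hk3 : b (k+1) ≤ h x := by
        by_contra hcon
        push_neg at hcon
        exact hnotC (k+1) _ ⟨le_of_lt hk1, le_of_lt hcon⟩ hxC
      refine ⟨x, hxo, ?_⟩
      exact Set.mem_iUnion.mpr ⟨k, by simp only [Set.mem_setOf_eq, hgone k x hk3 hk2]; exact le_refl 1⟩
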